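/- arXiv:2204.02971 — 3 statements merged into one kernel-verified Lean document; each statement's English description precedes it below -/
import Mathlib

section
/- Suppose a, c, d, m are positive integers with m² = a·c, a/m > 2/3, d divides c with c/d = k odd, b' = 2d satisfies m − a ≤ b' ≤ c − m, gcd(a,d) = 1, a ≥ d ≥ gcd(b'+a, c), and a + d + gcd(b'+a, c) = m. Then c − 2m + a < 18. -/
/-- Case 1 of Theorem 2.4: under the listed conditions with a/m > 2/3, one
obtains the upper bound c − 2m + a < 18. -/
theorem case1_upper_bound
    (a c d m k : ℤ) (ha : 0 < a) (hc : 0 < c) (hd : 0 < d) (hm : 0 < m)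
    (harea : m ^ 2 = a * c)
    (hratio : 3 * a > 2 * m)
    (hk : c = k * d) (hkodd : Odd k)
    (hb1 : m - a ≤ 2 * d) (hb2 : 2 * d ≤ c - m)
    (hcop : IsCoprime a d)
    (hord1 : d ≤ a) (hord2 : (Int.gcd (2 * d + a) c : ℤ) ≤ d)
    (hsum : a + d + (Int.gcd (2 * d + a) c : ℤ) = m) :
    c - 2 * m + a < 18 := by
  set g : ℤ := (Int.gcd (2 * d + a) c : ℤ) with hgdef
  set s : ℤ := c - 2 * m + a with hsdef
  have hgl : g ∣ 2 * d + a := Int.gcd_dvd_left (2 * d + a) c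
  have hgr : g ∣ c := Int.gcd_dvd_right (2 * d + a) c
  have hgpos : 0 < g := by
    have : Int.gcd (2 * d + a) c ≠ 0 := by
      simp only [Ne, Int.gcd_eq_zero_iff, not_and]
      intro _ hc0
      omega
    have h := Nat.pos_of_ne_zero this
    rw [hgdef]
    exact_mod_cast h
  -- key algebraic identity : a * s = (d + g)^2
  have hkey : a * s = (d + g) ^ 2 := by
    have hdg : d + g = m - a := by linarith
    rw [hdg, hsdef]
    linear_combination -harea
  -- s is positive
  have hspos : 0 < s := by
    have h1 : 0 < (d + g) ^ 2 := by positivity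
    nlinarith
  -- a > 2(d+g) from the ratio condition
  have haratio : a > 2 * (d + g) := by linarith
  -- hence d + g > 2 s
  have htgt : d + g > 2 * s := by nlinarith
  -- from hb2 : s ≥ d - g
  have hsge : s ≥ d - g := by linarith
  -- hence s < 2 g
  have hslt : s < 2 * g := by linarith
  -- g divides s
  have hgs : g ∣ s := by
    have hrep : s = c - (2 * d + a) - g * 2 := by linarith
    rw [hrep]
    exact dvd_sub (dvd_sub hgr hgl) (dvd_mul_right g 2)
  -- therefore s = g
  have hsg : s = g := by
    obtain ⟨q, hq⟩ := hgs
    have hqpos : 0 < q := by nlinarith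
    have hqlt : q < 2 := by nlinarith
    have : q = 1 := by omega
    rw [hq, this, mul_one]
  -- coprimality : g is coprime to d
  have hcop2 : IsCoprime (2 * d + a) d := by
    have h := hcop.add_mul_left_left 2
    have : a + d * 2 = 2 * d + a := by ring
    rwa [this] at h
  have hgd : IsCoprime g d := hcop2.of_isCoprime_of_dvd_left hgl
  have hsd : IsCoprime s d := hsg ▸ hgd
  -- s divides d^2
  have hsdvd : s ∣ d ^ 2 := by
    refine ⟨a - 2 * d - s, ?_⟩
    have h2 : a * s = (d + s) ^ 2 := by rw [hsg] at hkey ⊢; exact hkey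
    linear_combination -h2
  have hunit : IsUnit s := (hsd.pow_right).isUnit_of_dvd' dvd_rfl hsdvd
  have : s = 1 ∨ s = -1 := Int.isUnit_iff.mp hunit
  omega
end

section
/- Let k ≥ 4 be an integer and a, x positive integers. If the quadratic equation m² = k·a·(m − a − x) has a real solution m with 3 ≤ 2m/a < 4, then k > 4 and a ≤ 4kx/(2k − 9). -/
/-- Case 2 of Theorem 2.4: if m² = k·a·(m − a − x) has a real solution m
with 3 ≤ 2m/a < 4 (where k ≥ 4, a, x positive integers), then k > 4 and
a ≤ 4kx/(2k − 9). -/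
theorem case2_bound_on_a
    (k : ℤ) (hk : 4 ≤ k) (a x : ℤ) (ha : 0 < a) (hx : 0 < x)
    (m : ℝ)
    (heq : m ^ 2 = (k : ℝ) * a * (m - a - x))
    (hlo : 3 ≤ 2 * m / a) (hhi : 2 * m / a < 4) :
    4 < k ∧ (a : ℝ) ≤ 4 * k * x / (2 * k - 9) := by
  have haR : (0 : ℝ) < (a : ℝ) := by exact_mod_cast ha
  have hxR : (0 : ℝ) < (x : ℝ) := by exact_mod_cast hx
  have hkR : (4 : ℝ) ≤ (k : ℝ) := by exact_mod_cast hk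
  have hlo' : 3 * (a : ℝ) ≤ 2 * m := (le_div_iff₀ haR).mp hlo
  have hhi' : 2 * m < 4 * (a : ℝ) := (div_lt_iff₀ haR).mp hhi
  have hk5 : 4 < k := by
    by_contra h
    have hk4 : k = 4 := le_antisymm (not_lt.mp h) hk
    subst hk4
    push_cast at heq
    nlinarith [sq_nonneg (m - 2 * (a : ℝ))]
  refine ⟨hk5, ?_⟩
  have hk5R : (5 : ℝ) ≤ (k : ℝ) := by exact_mod_cast hk5
  have hden : (0 : ℝ) < 2 * (k : ℝ) - 9 := by linarith
  rw [le_div_iff₀ hden]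
  nlinarith [mul_nonneg (by linarith : (0:ℝ) ≤ 2*m - 3*(a:ℝ))
    (by nlinarith : (0:ℝ) ≤ 2*(k:ℝ)*(a:ℝ) - 2*m - 3*(a:ℝ))]
end

section
/- For the triangle Δ with vertices (0,0), (2,0), (5,8): for every primitive vector λ = (u,v) ∈ ℤ², the width of Δ along λ is at least 4, and the width along (2,−1) equals 4. -/
/-- The triangle with vertices (0,0), (2,0), (5,8) as a subset of ℝ². -/
noncomputable def triangleDelta : Set (ℝ × ℝ) :=
  convexHull ℝ {(0, 0), (2, 0), (5, 8)}

/-- The width of the triangle along the direction (u, v). -/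
noncomputable def widthAlong (u v : ℝ) : ℝ :=
  sSup ((fun p : ℝ × ℝ => p.1 * u + p.2 * v) '' triangleDelta) -
    sInf ((fun p : ℝ × ℝ => p.1 * u + p.2 * v) '' triangleDelta)

lemma keyLinear (u v : ℝ) : IsLinearMap ℝ (fun p : ℝ × ℝ => p.1 * u + p.2 * v) := by
  constructor
  · intro x y; simp [Prod.fst_add, Prod.snd_add]; ring
  · intro c x; simp [smul_eq_mul]; ring

lemma mem0 (u v : ℝ) : (0:ℝ) ∈ ((fun p : ℝ × ℝ => p.1 * u + p.2 * v) '' triangleDelta) :=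
  ⟨(0,0), subset_convexHull ℝ _ (by simp), by norm_num⟩

lemma mema (u v : ℝ) : (2*u : ℝ) ∈ ((fun p : ℝ × ℝ => p.1 * u + p.2 * v) '' triangleDelta) :=
  ⟨(2,0), subset_convexHull ℝ _ (by simp), by norm_num⟩

lemma memb (u v : ℝ) : (5*u+8*v : ℝ) ∈ ((fun p : ℝ × ℝ => p.1 * u + p.2 * v) '' triangleDelta) :=
  ⟨(5,8), subset_convexHull ℝ _ (by simp), by ring⟩

lemma sSup_img (u v : ℝ) :
    sSup ((fun p : ℝ × ℝ => p.1 * u + p.2 * v) '' triangleDelta)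
      = max 0 (max (2*u) (5*u+8*v)) := by
  apply IsGreatest.csSup_eq
  constructor
  · rcases max_choice 0 (max (2*u) (5*u+8*v)) with h | h
    · rw [h]; exact mem0 u v
    · rw [h]
      rcases max_choice (2*u) (5*u+8*v) with h' | h'
      · rw [h']; exact mema u v
      · rw [h']; exact memb u v
  · rintro x ⟨p, hp, rfl⟩
    have := convexHull_min (s := ({(0, 0), (2, 0), (5, 8)} : Set (ℝ × ℝ)))
      (t := {w : ℝ × ℝ | w.1 * u + w.2 * v ≤ max 0 (max (2*u) (5*u+8*v))}) ?_
      (convex_halfSpace_le (keyLinear u v) _) hp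
    · exact this
    · rintro q (rfl | rfl | rfl)
      · simpa using le_max_left 0 _
      · simp only [Set.mem_setOf_eq]
        calc (2:ℝ)*u + 0*v = 2*u := by ring
          _ ≤ _ := le_max_of_le_right (le_max_left _ _)
      · simp only [Set.mem_setOf_eq]
        calc (5:ℝ)*u + 8*v = 5*u+8*v := by ring
          _ ≤ _ := le_max_of_le_right (le_max_right _ _)

lemma sInf_img (u v : ℝ) :
    sInf ((fun p : ℝ × ℝ => p.1 * u + p.2 * v) '' triangleDelta)
      = min 0 (min (2*u) (5*u+8*v)) := by
  apply IsLeast.csInf_eq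
  constructor
  · rcases min_choice 0 (min (2*u) (5*u+8*v)) with h | h
    · rw [h]; exact mem0 u v
    · rw [h]
      rcases min_choice (2*u) (5*u+8*v) with h' | h'
      · rw [h']; exact mema u v
      · rw [h']; exact memb u v
  · rintro x ⟨p, hp, rfl⟩
    have := convexHull_min (s := ({(0, 0), (2, 0), (5, 8)} : Set (ℝ × ℝ)))
      (t := {w : ℝ × ℝ | min 0 (min (2*u) (5*u+8*v)) ≤ w.1 * u + w.2 * v}) ?_
      (convex_halfSpace_ge (keyLinear u v) _) hp
    · exact this
    · rintro q (rfl | rfl | rfl)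
      · simpa using min_le_left 0 _
      · simp only [Set.mem_setOf_eq]
        calc min 0 (min (2*u) (5*u+8*v)) ≤ 2*u := min_le_of_right_le (min_le_left _ _)
          _ = (2:ℝ)*u + 0*v := by ring
      · simp only [Set.mem_setOf_eq]
        calc min 0 (min (2*u) (5*u+8*v)) ≤ 5*u+8*v := min_le_of_right_le (min_le_right _ _)
          _ = (5:ℝ)*u + 8*v := by ring

lemma widthAlong_eq (u v : ℝ) :
    widthAlong u v = max 0 (max (2*u) (5*u+8*v)) - min 0 (min (2*u) (5*u+8*v)) := by
  rw [widthAlong, sSup_img, sInf_img]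

/-- For every primitive vector (u,v) ∈ ℤ² the width of the triangle
(0,0), (2,0), (5,8) along (u,v) is at least 4, and the width along (2,−1)
equals 4. -/
theorem width_of_triangle1 :
    (∀ u v : ℤ, Int.gcd u v = 1 → (4 : ℝ) ≤ widthAlong (u : ℝ) (v : ℝ)) ∧
    widthAlong 2 (-1) = 4 := by
  constructor
  · intro u v hg
    have hne : ¬(u = 0 ∧ v = 0) := by
      rintro ⟨rfl, rfl⟩; simp at hg
    have hkey : (4 ≤ 2*u ∨ 2*u ≤ -4) ∨ (4 ≤ 5*u+8*v ∨ 5*u+8*v ≤ -4) ∨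
        (4 ≤ 3*u+8*v ∨ 3*u+8*v ≤ -4) := by omega
    rw [widthAlong_eq]
    have hM0 : (0:ℝ) ≤ max (0:ℝ) (max (2*(u:ℝ)) (5*u+8*v)) := le_max_left _ _
    have hMa : (2*(u:ℝ)) ≤ max (0:ℝ) (max (2*(u:ℝ)) (5*u+8*v)) := le_max_of_le_right (le_max_left _ _)
    have hMb : (5*(u:ℝ)+8*v) ≤ max (0:ℝ) (max (2*(u:ℝ)) (5*u+8*v)) := le_max_of_le_right (le_max_right _ _)
    have hm0 : min (0:ℝ) (min (2*(u:ℝ)) (5*u+8*v)) ≤ 0 := min_le_left _ _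
    have hma : min (0:ℝ) (min (2*(u:ℝ)) (5*u+8*v)) ≤ 2*u := min_le_of_right_le (min_le_left _ _)
    have hmb : min (0:ℝ) (min (2*(u:ℝ)) (5*u+8*v)) ≤ 5*u+8*v := min_le_of_right_le (min_le_right _ _)
    rcases hkey with (h | h) | (h | h) | (h | h) <;>
      · have h' : ((_:ℤ):ℝ) ≤ ((_:ℤ):ℝ) := Int.cast_le.mpr h
        push_cast at h'
        linarith
  · rw [widthAlong_eq]; norm_num
end
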